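/- The network-based redistribution mechanism (NRM) in trees is individually rational: for every agent i who reports her true valuation (v̂_i = v_i), whatever subset of her neighbours she invites and whatever the other agents report, her utility under NRM is nonnegative. In particular, every non-winning agent's utility equals the redistribution R_i ≥ 0 she receives (0 if she receives none), and the winner w's utility equals v_w − p^{auc}_w + R_w ≥ 0. -/
import Mathlib


open Finset

attribute [local instance] Classical.propDecidable

noncomputable section

/-- A tree network rooted at a resource owner `o`: the agents are the elements of
the finite type `α`, and `parent i = none` means that the parent of agent `i` is
the owner `o` herself.  The field `depth` records the distance to the owner and
witnesses that the parent relation is well-founded. -/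
structure TreeNet (α : Type) [Fintype α] [DecidableEq α] where
  parent : α → Option α
  depth : α → ℕ
  depth_root : ∀ i, parent i = none → depth i = 0
  depth_child : ∀ i j, parent i = some j → depth i = depth j + 1

namespace TreeNet

variable {α : Type} [Fintype α] [DecidableEq α]

/-- `j` is a strict ancestor of `i`: iterating `parent` from `i` reaches `j`. -/
def StrictAnc (T : TreeNet α) (j i : α) : Prop :=
  ∃ m : ℕ, 0 < m ∧ (fun x : Option α => x.bind T.parent)^[m] (some i) = some j

/-- the subtree `V_i` of agent `i` inside the participant set `V`:
`i` together with all its descendants. -/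
def sub (T : TreeNet α) (V : Finset α) (i : α) : Finset α :=
  V.filter fun x => x = i ∨ T.StrictAnc i x

/-- `n_i`, the number of agents in the subtree of `i`. -/
def nsub (T : TreeNet α) (V : Finset α) (i : α) : ℕ := (T.sub V i).card

/-- `v^{(1)}_D`: the highest reported valuation in `D` (with the convention `0`
for `D = ∅`). -/
def vmax (val : α → ℝ) (D : Finset α) : ℝ :=
  if h : D.Nonempty then D.sup' h val else 0

/-- the list of strict ancestors of `i`, ordered by increasing depth. -/
def ancList (T : TreeNet α) (i : α) : List α :=
  match h : T.parent i with
  | none => []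
  | some j => T.ancList j ++ [j]
termination_by T.depth i
decreasing_by
  have := T.depth_child i j h
  omega

/-- the full sequence `a_1, …, a_{k+1}`: the strict ancestors of the highest
bidder `hb` ordered by increasing depth, followed by `hb` itself. -/
def seq (T : TreeNet α) (hb : α) : List α := T.ancList hb ++ [hb]

/-- `a_j`, as an `Option α`: `none` for `j = 0` (the owner `o`) and out of range. -/
def aIdx (T : TreeNet α) (hb : α) (j : ℕ) : Option α :=
  if j = 0 then none else (T.seq hb)[j - 1]?

/-- the required payment `p^{auc}_{a_j} = v^{(1)}_{V ∖ V_{a_j}}` (and `0` for `j = 0`). -/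
def pauc (T : TreeNet α) (V : Finset α) (val : α → ℝ) (hb : α) (j : ℕ) : ℝ :=
  match T.aIdx hb j with
  | none => 0
  | some i => vmax val (V \ T.sub V i)

/-- the children inside `V` of a vertex (`none` denotes the owner `o`). -/
def childrenOf (T : TreeNet α) (V : Finset α) (x : Option α) : Finset α :=
  V.filter fun y => T.parent y = x

/-- `X_j`: the set of children of `a_{j-1}`. -/
def X (T : TreeNet α) (V : Finset α) (hb : α) (j : ℕ) : Finset α :=
  T.childrenOf V (T.aIdx hb (j - 1))

/-- `n_{X_j} = Σ_{q ∈ X_j} n_q`. -/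
def nX (T : TreeNet α) (V : Finset α) (hb : α) (j : ℕ) : ℕ :=
  ∑ q ∈ T.X V hb j, T.nsub V q

/-- subtree of an optional vertex, with the convention `∅` for `none`. -/
def subO (T : TreeNet α) (V : Finset α) : Option α → Finset α
  | none => ∅
  | some i => T.sub V i

/-- subtree of an optional vertex, with the convention `V` for the owner `o`. -/
def subUp (T : TreeNet α) (V : Finset α) : Option α → Finset α
  | none => V
  | some i => T.sub V i

/-- `S_{-q}` at step `j`, where `sel` selects a highest bidder in a given set
(`h' = sel (V ∖ V_q)` is a highest bidder without `q`'s participation). -/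
def Sneg (T : TreeNet α) (V : Finset α) (val : α → ℝ) (sel : Finset α → Option α)
    (hb : α) (j : ℕ) (q : α) : ℝ :=
  match sel (V \ T.sub V q) with
  | none => 0
  | some h' =>
      if T.aIdx h' (j - 1) = T.aIdx hb (j - 1) then
        vmax val (V \ (T.subO V (T.aIdx h' j) ∪ T.sub V q)) - T.pauc V val hb (j - 1)
      else 0

/-- the money `R_q = (n_q / n_{X_j}) ⬝ S_{-q}` redistributed to `q` in step `j`. -/
def R (T : TreeNet α) (V : Finset α) (val : α → ℝ) (sel : Finset α → Option α)
    (hb : α) (j : ℕ) (q : α) : ℝ :=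
  (T.nsub V q : ℝ) / (T.nX V hb j : ℝ) * T.Sneg V val sel hb j q

/-- the allocation condition `v̂_{a_j} ≥ p^{auc}_{a_j}` holds at step `j`. -/
def Stops (T : TreeNet α) (V : Finset α) (val : α → ℝ) (hb : α) (j : ℕ) : Prop :=
  ∃ i, T.aIdx hb j = some i ∧ T.pauc V val hb j ≤ val i

/-- the step `J` at which the procedure stops. -/
def stepJ (T : TreeNet α) (V : Finset α) (val : α → ℝ) (hb : α) : ℕ :=
  sInf {j | 1 ≤ j ∧ T.Stops V val hb j}

/-- the winner of the item. -/
def winner (T : TreeNet α) (V : Finset α) (val : α → ℝ) (hb : α) : Option α :=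
  T.aIdx hb (T.stepJ V val hb)

/-- the (first) step at which agent `i` is assigned a payment. -/
def stepOf (T : TreeNet α) (V : Finset α) (val : α → ℝ) (hb : α) (i : α) : ℕ :=
  sInf {j | 1 ≤ j ∧ j ≤ T.stepJ V val hb ∧ i ∈ T.X V hb j}

/-- the payment of agent `i` under NRM: the winner pays `p^{auc}_{a_J} - R_{a_J}`,
every other agent considered in some executed step `j` pays `-R_q`, and every
agent not assigned a payment pays `0`. -/
def pay (T : TreeNet α) (V : Finset α) (val : α → ℝ) (sel : Finset α → Option α)
    (hb : α) (i : α) : ℝ :=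
  if T.winner V val hb = some i then
    T.pauc V val hb (T.stepJ V val hb) - T.R V val sel hb (T.stepJ V val hb) i
  else if ∃ j, 1 ≤ j ∧ j ≤ T.stepJ V val hb ∧ i ∈ T.X V hb j then
    -T.R V val sel hb (T.stepOf V val hb i) i
  else 0

/-- the surplus `S = Σ_{i ∈ V} p_i` of the mechanism. -/
def surplus (T : TreeNet α) (V : Finset α) (val : α → ℝ) (sel : Finset α → Option α)
    (hb : α) : ℝ :=
  ∑ i ∈ V, T.pay V val sel hb i

/-- the utility of agent `i` whose true valuation is `tv`:
`tv` if she wins, minus her payment. -/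
def util (T : TreeNet α) (V : Finset α) (val : α → ℝ) (sel : Finset α → Option α)
    (hb : α) (tv : ℝ) (i : α) : ℝ :=
  (if T.winner V val hb = some i then tv else 0) - T.pay V val sel hb i

/-- the participant set `V` is closed under taking parents
(as is every set generated by invitation chains). -/
def Closed (T : TreeNet α) (V : Finset α) : Prop :=
  ∀ i ∈ V, ∀ j, T.parent i = some j → j ∈ V

/-- `hb` is a highest bidder of `V`. -/
def IsTop (V : Finset α) (val : α → ℝ) (hb : α) : Prop :=
  hb ∈ V ∧ ∀ i ∈ V, val i ≤ val hb

/-- `sel` selects a highest bidder of every nonempty finite set of agents. -/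
def SelValid (val : α → ℝ) (sel : Finset α → Option α) : Prop :=
  ∀ D : Finset α, (D.Nonempty → ∃ b, sel D = some b) ∧
    ∀ b, sel D = some b → b ∈ D ∧ ∀ x ∈ D, val x ≤ val b

/-- the true neighbour set of agent `i` that she may invite: her children. -/
def childrenAll (T : TreeNet α) (i : α) : Finset α :=
  Finset.univ.filter fun y => T.parent y = some i

/-- agent `i` is reached from the owner by the chains of invitations `inv`
(the owner informs all her neighbours, i.e. the agents with `parent = none`). -/
def Reached (T : TreeNet α) (inv : α → Finset α) (i : α) : Prop :=
  match h : T.parent i with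
  | none => True
  | some j => T.Reached inv j ∧ i ∈ inv j
termination_by T.depth i
decreasing_by
  have := T.depth_child i j h
  omega

/-- the participant set generated by the invitations `inv`. -/
def Vgen (T : TreeNet α) (inv : α → Finset α) : Finset α :=
  Finset.univ.filter fun i => T.Reached inv i

end TreeNet

namespace TreeNet

variable {α : Type} [Fintype α] [DecidableEq α]

lemma seq_eq_none (T : TreeNet α) {i : α} (h : T.parent i = none) :
    T.seq i = [i] := by
  unfold seq
  rw [ancList.eq_def]
  split <;> simp_all

lemma seq_eq_some (T : TreeNet α) {i j : α} (h : T.parent i = some j) :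
    T.seq i = T.seq j ++ [i] := by
  unfold seq
  conv_lhs => rw [ancList.eq_def]
  split
  · simp_all
  · rename_i j' h'
    rw [h] at h'
    cases h'
    rw [List.append_assoc]

lemma seq_ne_nil (T : TreeNet α) (i : α) : T.seq i ≠ [] := by
  unfold seq; simp

lemma seq_getLast (T : TreeNet α) (j : α) :
    (T.seq j)[(T.seq j).length - 1]? = some j := by
  unfold seq
  rw [List.getElem?_append_right (by simp)]
  simp

lemma seq_chain (T : TreeNet α) (i : α) :
    (∀ x, (T.seq i)[0]? = some x → T.parent x = none) ∧
    (∀ m x, (T.seq i)[m+1]? = some x → T.parent x = (T.seq i)[m]?) := by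
  cases h : T.parent i with
  | none =>
    rw [T.seq_eq_none h]
    constructor
    · intro x hx
      simp only [List.getElem?_cons_zero, Option.some.injEq] at hx
      subst hx; exact h
    · intro m x hx
      simp at hx
  | some j =>
    have IH := T.seq_chain j
    rw [T.seq_eq_some h]
    have hpos : 0 < (T.seq j).length := List.length_pos_iff.mpr (T.seq_ne_nil j)
    constructor
    · intro x hx
      rw [List.getElem?_append_left hpos] at hx
      exact IH.1 x hx
    · intro m x hx
      rcases lt_trichotomy (m+1) (T.seq j).length with hm | hm | hm
      · rw [List.getElem?_append_left hm] at hx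
        rw [List.getElem?_append_left (by omega)]
        exact IH.2 m x hx
      · rw [List.getElem?_append_right (by omega)] at hx
        rw [hm] at hx
        simp only [Nat.sub_self, List.getElem?_cons_zero, Option.some.injEq] at hx
        subst hx
        rw [List.getElem?_append_left (by omega), h]
        have := T.seq_getLast j
        rw [show m = (T.seq j).length - 1 by omega]
        exact this.symm
      · rw [List.getElem?_append_right (by omega)] at hx
        have : m + 1 - (T.seq j).length ≥ 1 := by omega
        rw [List.getElem?_eq_none (by simpa using this)] at hx
        exact absurd hx (by simp)
termination_by T.depth i
decreasing_by
  have := T.depth_child i j h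
  omega

lemma aIdx_parent (T : TreeNet α) {hb x : α} {j : ℕ} (hj : 1 ≤ j)
    (hx : T.aIdx hb j = some x) : T.parent x = T.aIdx hb (j-1) := by
  unfold aIdx at hx ⊢
  rw [if_neg (by omega)] at hx
  match j, hj with
  | 1, _ =>
    simp only [Nat.sub_self, if_pos rfl]
    exact (T.seq_chain hb).1 x (by simpa using hx)
  | (m+2), _ =>
    rw [if_neg (by omega)]
    have h2 : (T.seq hb)[m+1]? = some x := by simpa using hx
    have := (T.seq_chain hb).2 m x h2
    simpa using this

lemma sub_subset_of_parent (T : TreeNet α) (V : Finset α) {q a : α}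
    (h : T.parent q = some a) : T.sub V q ⊆ T.sub V a := by
  intro y hy
  simp only [sub, Finset.mem_filter] at hy ⊢
  refine ⟨hy.1, Or.inr ?_⟩
  rcases hy.2 with rfl | ⟨m, hm, hit⟩
  · exact ⟨1, one_pos, by simp [h]⟩
  · refine ⟨m+1, by omega, ?_⟩
    rw [Function.iterate_succ_apply', hit]
    simp [h]

lemma vmax_nonneg (val : α → ℝ) (hval : ∀ j, 0 ≤ val j) (D : Finset α) :
    0 ≤ vmax val D := by
  unfold vmax
  split
  · rename_i hD
    obtain ⟨x, hx⟩ := hD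
    exact le_trans (hval x) (Finset.le_sup' val hx)
  · exact le_refl 0

lemma vmax_mono (val : α → ℝ) (hval : ∀ j, 0 ≤ val j) {A B : Finset α}
    (hAB : A ⊆ B) : vmax val A ≤ vmax val B := by
  rcases A.eq_empty_or_nonempty with rfl | hA
  · simpa [vmax] using vmax_nonneg val hval B
  · have hB := hA.mono hAB
    simp only [vmax, dif_pos hA, dif_pos hB]
    exact Finset.sup'_le hA val fun a ha => Finset.le_sup' val (hAB ha)

lemma Sneg_nonneg (T : TreeNet α) (V : Finset α) (val : α → ℝ)
    (hval : ∀ j, 0 ≤ val j) (sel : Finset α → Option α) (hb q : α) {j : ℕ}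
    (hj : 1 ≤ j) (hq : T.parent q = T.aIdx hb (j-1)) :
    0 ≤ T.Sneg V val sel hb j q := by
  unfold Sneg
  split
  · exact le_refl 0
  · rename_i h' hh'
    split
    · rename_i hcond
      rw [sub_nonneg]
      cases ha : T.aIdx hb (j-1) with
      | none =>
        have : T.pauc V val hb (j-1) = 0 := by rw [pauc, ha]
        rw [this]
        exact vmax_nonneg val hval _
      | some a =>
        have hpauc : T.pauc V val hb (j-1) = vmax val (V \ T.sub V a) := by
          rw [pauc, ha]
        rw [hpauc]
        apply vmax_mono val hval
        apply Finset.sdiff_subset_sdiff (Finset.Subset.refl V)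
        apply Finset.union_subset
        · cases hx : T.aIdx h' j with
          | none => simp [subO]
          | some x =>
            have hpx : T.parent x = T.aIdx h' (j-1) := T.aIdx_parent hj hx
            rw [hcond, ha] at hpx
            simpa [subO] using T.sub_subset_of_parent V hpx
        · rw [ha] at hq
          exact T.sub_subset_of_parent V hq
    · exact le_refl 0

lemma R_nonneg (T : TreeNet α) (V : Finset α) (val : α → ℝ)
    (hval : ∀ j, 0 ≤ val j) (sel : Finset α → Option α) (hb q : α) {j : ℕ}
    (hj : 1 ≤ j) (hq : T.parent q = T.aIdx hb (j-1)) :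
    0 ≤ T.R V val sel hb j q := by
  unfold R
  exact mul_nonneg (div_nonneg (Nat.cast_nonneg _) (Nat.cast_nonneg _))
    (T.Sneg_nonneg V val hval sel hb q hj hq)

end TreeNet

/-- The network-based redistribution mechanism in trees is
individually rational: every agent `i` who reports her true valuation
(`val i = v i`), whatever subset of her neighbours she invites and whatever the
other agents report, has nonnegative utility under NRM.  Moreover every
non-winning agent's utility equals the redistribution `-p_i = R_i ≥ 0` she
receives, and the winner's utility equals `v_w - p^{auc}_w + R_w ≥ 0`. -/
theorem TreeNet.nrm_tree_individually_rational
    {α : Type} [Fintype α] [DecidableEq α] (T : TreeNet α)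
    (v : α → ℝ) (hv : ∀ j, 0 ≤ v j)                 -- the true valuations
    (i : α)
    (val : α → ℝ) (hval : ∀ j, 0 ≤ val j)           -- the reported valuations
    (hvi : val i = v i)                             -- i reports her true valuation
    (inv : α → Finset α)
    (hinv : ∀ j, inv j ⊆ T.childrenAll j)           -- arbitrary invitations
    (sel : Finset α → Option α) (hsel : TreeNet.SelValid val sel)
    (hb : α) (hhb : TreeNet.IsTop (T.Vgen inv) val hb) :
    0 ≤ T.util (T.Vgen inv) val sel hb (v i) i ∧
    (T.winner (T.Vgen inv) val hb = some i →
      T.util (T.Vgen inv) val sel hb (v i) i =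
        v i - T.pauc (T.Vgen inv) val hb (T.stepJ (T.Vgen inv) val hb)
          + T.R (T.Vgen inv) val sel hb (T.stepJ (T.Vgen inv) val hb) i) ∧
    (T.winner (T.Vgen inv) val hb ≠ some i →
      T.util (T.Vgen inv) val sel hb (v i) i = -T.pay (T.Vgen inv) val sel hb i ∧
      0 ≤ -T.pay (T.Vgen inv) val sel hb i) := by
  set V := T.Vgen inv with hVdef
  set J := T.stepJ V val hb with hJdef
  by_cases hw : T.winner V val hb = some i
  · -- i is the winner
    have hwi : T.aIdx hb J = some i := hw
    have hJ0 : J ≠ 0 := by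
      intro h0
      rw [h0] at hwi
      simp [TreeNet.aIdx] at hwi
    have hSne : {j | 1 ≤ j ∧ T.Stops V val hb j}.Nonempty := by
      by_contra hcon
      rw [Set.not_nonempty_iff_eq_empty] at hcon
      apply hJ0
      rw [hJdef, TreeNet.stepJ, hcon, Nat.sInf_empty]
    have hJmem : 1 ≤ J ∧ T.Stops V val hb J := Nat.sInf_mem hSne
    obtain ⟨hJ1, w, hwa, hwle⟩ := hJmem
    rw [hwi] at hwa
    cases hwa
    have hpar : T.parent i = T.aIdx hb (J-1) := T.aIdx_parent hJ1 hwi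
    have hR : 0 ≤ T.R V val sel hb J i :=
      T.R_nonneg V val hval sel hb i hJ1 hpar
    have hpay : T.pay V val sel hb i =
        T.pauc V val hb J - T.R V val sel hb J i := by
      rw [TreeNet.pay, if_pos hw]
    have hutil : T.util V val sel hb (v i) i =
        v i - T.pauc V val hb J + T.R V val sel hb J i := by
      rw [TreeNet.util, if_pos hw, hpay]; ring
    refine ⟨?_, fun _ => hutil, fun hne => absurd hw hne⟩
    rw [hutil]
    have : T.pauc V val hb J ≤ v i := by rw [← hvi]; exact hwle
    linarith
  · -- i is not the winner
    have hutil : T.util V val sel hb (v i) i = -T.pay V val sel hb i := by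
      rw [TreeNet.util, if_neg hw]; ring
    have hpay : 0 ≤ -T.pay V val sel hb i := by
      rw [TreeNet.pay, if_neg hw]
      split
      · rename_i hex
        have hmem : T.stepOf V val hb i ∈
            {j | 1 ≤ j ∧ j ≤ J ∧ i ∈ T.X V hb j} := Nat.sInf_mem hex
        obtain ⟨hj1, -, hXmem⟩ := hmem
        have hpar : T.parent i = T.aIdx hb (T.stepOf V val hb i - 1) := by
          have h2 := hXmem
          simp only [TreeNet.X, TreeNet.childrenOf, Finset.mem_filter] at h2
          exact h2.2
        rw [neg_neg]
        exact T.R_nonneg V val hval sel hb i hj1 hpar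
      · simp
    exact ⟨by rw [hutil]; exact hpay, fun h => absurd h hw, fun _ => ⟨hutil, hpay⟩⟩
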